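/- arXiv:2307.11064 — 2 statements merged into one kernel-verified Lean document; each statement's English description precedes it below -/
import Mathlib

section
/- Let Φ be a regular root system in a finite-dimensional real vector space and let Γ be a group strongly graded by Φ with root subgroups {K_α}_{α∈Φ}. If Φ₁, Φ₂ ∈ Borel(Φ) are co-maximal, then ⟨K_{Φ₁∩Φ₂}, K_{−(Φ₁∩Φ₂)}⟩ = Γ. -/
universe u v

variable {E : Type u} [AddCommGroup E] [Module ℝ E] [FiniteDimensional ℝ E]
variable {Γ : Type v} [Group Γ]

/-- `Φ` is a root system in `E`: a finite set spanning `E`, not containing `0`, and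
closed under negation. -/
def IsRootSystem (Φ : Set E) : Prop :=
  Φ.Finite ∧ Submodule.span ℝ Φ = ⊤ ∧ (0 : E) ∉ Φ ∧ ∀ α ∈ Φ, -α ∈ Φ

/-- A linear functional is in general position with respect to `Φ` if it does not
vanish on `Φ` and takes distinct values at distinct roots. -/
def IsGeneralPosition (Φ : Set E) (f : E →ₗ[ℝ] ℝ) : Prop :=
  (∀ α ∈ Φ, f α ≠ 0) ∧ ∀ α ∈ Φ, ∀ β ∈ Φ, α ≠ β → f α ≠ f β

/-- `B` is a Borel set of `Φ`. -/
def IsBorelSet (Φ B : Set E) : Prop :=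
  ∃ f : E →ₗ[ℝ] ℝ, IsGeneralPosition Φ f ∧ B = {α ∈ Φ | 0 < f α}

/-- Two sets are co-minimal if their intersection spans a 1-dimensional subspace. -/
def CoMinimal (A B : Set E) : Prop :=
  Module.finrank ℝ ↥(Submodule.span ℝ (A ∩ B)) = 1

/-- Two Borel sets `A`, `B` are co-maximal if `A` and `−B` are co-minimal. -/
def CoMaximal (A B : Set E) : Prop := CoMinimal A (-B)

/-- The subgroup `K_A = ⟨K_α : α ∈ A⟩` generated by the root subgroups of roots in
`A`. -/
def KA (K : E → Subgroup Γ) (A : Set E) : Subgroup Γ := ⨆ α ∈ A, K α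

open scoped commutatorElement in
/-- The group `Γ` is graded by the root system `Φ` with root subgroups `K α`:
the `K α`, `α ∈ Φ`, generate `Γ`, and for `α, β ∈ Φ` with `β ∉ ℝ_{<0}·α`,
`[K_α, K_β] ⊆ ⟨K_γ : γ = aα + bβ ∈ Φ, a, b ≥ 1⟩`. -/
def IsGraded (Φ : Set E) (K : E → Subgroup Γ) : Prop :=
  (⨆ α ∈ Φ, K α) = ⊤ ∧
  ∀ α ∈ Φ, ∀ β ∈ Φ, (¬ ∃ c : ℝ, c < 0 ∧ β = c • α) →
    ∀ g ∈ K α, ∀ h ∈ K β,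
      ⁅g, h⁆ ∈ KA K {γ ∈ Φ | ∃ a b : ℝ, 1 ≤ a ∧ 1 ≤ b ∧ γ = a • α + b • β}

/-- The boundary of a Borel set `Φ₁` of `Φ`. -/
def borelBoundary (Φ Φ₁ : Set E) : Set E :=
  {α ∈ Φ₁ | ∃ Φ₂, IsBorelSet Φ Φ₂ ∧ CoMinimal Φ₁ Φ₂ ∧ α ∈ Φ₁ ∩ Φ₂}

/-- The core of a Borel set `Φ₁` of `Φ`. -/
def borelCore (Φ Φ₁ : Set E) : Set E := Φ₁ \ borelBoundary Φ Φ₁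

/-- The grading is strong if, in addition, for every Borel set `Φ₁` and every
`β ∈ Core(Φ₁)`, `K_β ⊆ ⟨K_γ : γ ∈ Φ₁ ∖ ℝ_{>0}·β⟩`. -/
def IsStronglyGraded (Φ : Set E) (K : E → Subgroup Γ) : Prop :=
  IsGraded Φ K ∧
  ∀ Φ₁ : Set E, IsBorelSet Φ Φ₁ → ∀ β ∈ borelCore Φ Φ₁,
    K β ≤ KA K (Φ₁ \ {x | ∃ c : ℝ, 0 < c ∧ x = c • β})

/-- A set of roots is irreducible if it admits no partition into two disjoint nonempty
subsets whose spans intersect trivially. -/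
def IsIrreducibleRootSet (Ψ : Set E) : Prop :=
  ¬ ∃ A B : Set E, A.Nonempty ∧ B.Nonempty ∧ Disjoint A B ∧ A ∪ B = Ψ ∧
    Submodule.span ℝ A ⊓ Submodule.span ℝ B = ⊥

/-- `Ψ` is a root subsystem of `Φ`. -/
def IsRootSubsystem (Φ Ψ : Set E) : Prop :=
  Ψ.Nonempty ∧ Ψ ⊆ Φ ∧ Φ ∩ (Submodule.span ℝ Ψ : Set E) = Ψ

/-- `Φ` is regular: every root lies in an irreducible root subsystem spanning a
2-dimensional subspace. -/
def IsRegularRootSystem (Φ : Set E) : Prop :=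
  ∀ α ∈ Φ, ∃ Ψ : Set E, IsRootSubsystem Φ Ψ ∧ IsIrreducibleRootSet Ψ ∧
    Module.finrank ℝ ↥(Submodule.span ℝ Ψ) = 2 ∧ α ∈ Ψ

section AuxLemmas

open Module

variable {E' : Type u} [AddCommGroup E'] [Module ℝ E'] [FiniteDimensional ℝ E']

lemma aux_exists_dual_nonzero (V : Finset E') (hV : ∀ v ∈ V, v ≠ (0:E')) :
    ∃ g : E' →ₗ[ℝ] ℝ, ∀ v ∈ V, g v ≠ 0 := by
  classical
  induction V using Finset.induction_on with
  | empty => exact ⟨0, by simp⟩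
  | @insert a V ha ih =>
      obtain ⟨g, hg⟩ := ih (fun v hv => hV v (Finset.mem_insert_of_mem hv))
      have ha0 : a ≠ 0 := hV a (Finset.mem_insert_self a V)
      have hex : ¬ ∀ φ : Module.Dual ℝ E', φ a = 0 := by
        rw [Module.forall_dual_apply_eq_zero_iff]; exact ha0
      push_neg at hex
      obtain ⟨h, hha⟩ := hex
      obtain ⟨c, hc⟩ := Infinite.exists_notMem_finset
        ((insert a V).image (fun w => -g w / h w))
      refine ⟨g + c • h, ?_⟩
      intro v hv
      simp only [LinearMap.add_apply, LinearMap.smul_apply, smul_eq_mul]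
      by_cases hhv : h v = 0
      · have hvV : v ∈ V := by
          rcases Finset.mem_insert.mp hv with rfl | hvV
          · exact absurd hhv hha
          · exact hvV
        simpa [hhv] using hg v hvV
      · intro hEq
        exact hc (Finset.mem_image.mpr ⟨v, hv, by field_simp; linarith⟩)

lemma aux_exists_dual_pair {γ δ : E'} (h : LinearIndependent ℝ ![γ, δ]) :
    ∃ f : E' →ₗ[ℝ] ℝ, f γ = 1 ∧ f δ = 1 := by
  classical
  have hs : LinearIndepOn ℝ id ({γ, δ} : Set E') := by
    have := h.linearIndepOn_id
    have hr : Set.range ![γ, δ] = ({γ, δ} : Set E') := by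
      ext x
      simp only [Set.mem_range, Fin.exists_fin_two, Set.mem_insert_iff, Set.mem_singleton_iff]
      constructor
      · rintro (h1 | h2) <;> simp_all
      · rintro (rfl | rfl) <;> simp
    rwa [hr] at this
  let b := Module.Basis.extend hs
  refine ⟨b.constr ℝ (fun _ => (1:ℝ)), ?_, ?_⟩
  · have hγ : γ ∈ hs.extend (Set.subset_univ _) := hs.subset_extend _ (by simp)
    have := b.constr_basis ℝ (fun _ => (1:ℝ)) ⟨γ, hγ⟩
    simpa [b, Module.Basis.extend_apply_self] using this
  · have hδ : δ ∈ hs.extend (Set.subset_univ _) := hs.subset_extend _ (by simp)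
    have := b.constr_basis ℝ (fun _ => (1:ℝ)) ⟨δ, hδ⟩
    simpa [b, Module.Basis.extend_apply_self] using this

end AuxLemmas


section AuxLemmas2

open Module

variable {E' : Type u} [AddCommGroup E'] [Module ℝ E'] [FiniteDimensional ℝ E']

lemma aux_range_pair (γ δ : E') : Set.range ![γ, δ] = ({γ, δ} : Set E') := by
  ext x
  simp only [Set.mem_range, Fin.exists_fin_two, Set.mem_insert_iff, Set.mem_singleton_iff]
  constructor
  · rintro (h1 | h2) <;> simp_all
  · rintro (rfl | rfl) <;> simp

lemma aux_pair_indep {γ δ : E'} (hγ0 : γ ≠ 0) (hδ0 : δ ≠ 0)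
    (hδγ : δ ∉ (Submodule.span ℝ {γ} : Set E')) :
    LinearIndependent ℝ ![γ, δ] := by
  rw [linearIndependent_fin2]
  refine ⟨hδ0, fun a ha => ?_⟩
  simp only [Matrix.cons_val_one, Matrix.head_cons, Matrix.cons_val_zero] at ha
  -- ha : a • δ = γ
  have ha0 : a ≠ 0 := by
    rintro rfl
    rw [zero_smul] at ha
    exact hγ0 ha.symm
  apply hδγ
  rw [SetLike.mem_coe, Submodule.mem_span_singleton]
  exact ⟨a⁻¹, by rw [← ha, smul_smul, inv_mul_cancel₀ ha0, one_smul]⟩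

lemma aux_exists_gp (Φ : Set E') (hfin : Φ.Finite) (h0 : (0:E') ∉ Φ)
    {γ δ : E'} (hind : LinearIndependent ℝ ![γ, δ]) :
    ∃ f : E' →ₗ[ℝ] ℝ, IsGeneralPosition Φ f ∧ 0 < f γ ∧ 0 < f δ := by
  classical
  obtain ⟨f₀, hf₀γ, hf₀δ⟩ := aux_exists_dual_pair hind
  set Fin1 : Finset E' := hfin.toFinset with hFin1
  set V : Finset E' := Fin1 ∪ ((Fin1 ×ˢ Fin1).filter (fun p => p.1 ≠ p.2)).image
      (fun p => p.1 - p.2) with hVdef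
  have hVne : ∀ v ∈ V, v ≠ (0:E') := by
    intro v hv
    rcases Finset.mem_union.mp hv with hv | hv
    · intro h; subst h; exact h0 ((Set.Finite.mem_toFinset hfin).mp hv)
    · obtain ⟨p, hp, rfl⟩ := Finset.mem_image.mp hv
      exact sub_ne_zero_of_ne (Finset.mem_filter.mp hp).2
  obtain ⟨g, hg⟩ := aux_exists_dual_nonzero V hVne
  set W : Finset E' := (insert γ (insert δ V)).filter (fun w => f₀ w ≠ 0) with hWdef
  have hγW : γ ∈ W := Finset.mem_filter.mpr
    ⟨Finset.mem_insert_self _ _, by rw [hf₀γ]; norm_num⟩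
  have hδW : δ ∈ W := Finset.mem_filter.mpr
    ⟨Finset.mem_insert_of_mem (Finset.mem_insert_self _ _), by rw [hf₀δ]; norm_num⟩
  have hWne : W.Nonempty := ⟨γ, hγW⟩
  set D : E' → ℝ := fun w => |f₀ w| / (2 * (|g w| + 1)) with hDdef
  set ε : ℝ := W.inf' hWne D with hεdef
  have hεpos : 0 < ε := by
    rw [hεdef, Finset.lt_inf'_iff]
    intro w hw
    have h1 : 0 < |f₀ w| := abs_pos.mpr (Finset.mem_filter.mp hw).2
    have h2 : 0 < 2 * (|g w| + 1) := by positivity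
    exact div_pos h1 h2
  set f : E' →ₗ[ℝ] ℝ := f₀ + ε • g with hfdef
  have hfapp : ∀ w : E', f w = f₀ w + ε * g w := by
    intro w; simp [hfdef]
  have key : ∀ w ∈ W, ε * |g w| < |f₀ w| := by
    intro w hw
    have hle : ε ≤ D w := Finset.inf'_le D hw
    have h1 : 0 < |f₀ w| := abs_pos.mpr (Finset.mem_filter.mp hw).2
    have h2 : 0 < 2 * (|g w| + 1) := by positivity
    rw [hDdef] at hle
    have hle' : ε * (2 * (|g w| + 1)) ≤ |f₀ w| := (le_div_iff₀ h2).mp hle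
    nlinarith [abs_nonneg (g w), hεpos]
  have claim1 : ∀ w ∈ W, 0 < f₀ w → 0 < f w := by
    intro w hw hpos
    have hb := key w hw
    have h3 : -(ε * |g w|) ≤ ε * g w := by nlinarith [neg_abs_le (g w)]
    rw [hfapp]
    rw [abs_of_pos hpos] at hb
    linarith
  have claim2 : ∀ w ∈ V, f w ≠ 0 := by
    intro w hw
    by_cases hf0 : f₀ w = 0
    · rw [hfapp, hf0, zero_add]
      exact mul_ne_zero (ne_of_gt hεpos) (hg w hw)
    · have hwW : w ∈ W := Finset.mem_filter.mpr
        ⟨Finset.mem_insert_of_mem (Finset.mem_insert_of_mem hw), hf0⟩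
      have hb := key w hwW
      rw [hfapp]
      intro hEq
      have h4 : f₀ w = -(ε * g w) := by linarith
      have h5 : |f₀ w| = ε * |g w| := by
        rw [h4, abs_neg, abs_mul, abs_of_pos hεpos]
      linarith
  refine ⟨f, ⟨?_, ?_⟩, ?_, ?_⟩
  · intro α hα
    exact claim2 α (Finset.mem_union_left _ ((Set.Finite.mem_toFinset hfin).mpr hα))
  · intro α hα β hβ hne hEq
    have hmem : α - β ∈ V := by
      apply Finset.mem_union_right
      exact Finset.mem_image.mpr ⟨(α, β), Finset.mem_filter.mpr
        ⟨Finset.mem_product.mpr ⟨(Set.Finite.mem_toFinset hfin).mpr hα,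
          (Set.Finite.mem_toFinset hfin).mpr hβ⟩, hne⟩, rfl⟩
    exact claim2 _ hmem (by rw [map_sub, hEq, sub_self])
  · exact claim1 γ hγW (by rw [hf₀γ]; norm_num)
  · exact claim1 δ hδW (by rw [hf₀δ]; norm_num)

end AuxLemmas2


section AuxCore

open Module

variable {E' : Type u} [AddCommGroup E'] [Module ℝ E'] [FiniteDimensional ℝ E']

lemma aux_mem_core (Φ : Set E') (hRS : IsRootSystem Φ) (hreg : IsRegularRootSystem Φ)
    {β : E'} (hβ : β ∈ Φ) :
    ∃ f : E' →ₗ[ℝ] ℝ, IsGeneralPosition Φ f ∧ 0 < f β ∧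
      β ∈ borelCore Φ {α ∈ Φ | 0 < f α} := by
  classical
  obtain ⟨hfin, hspan, h0, hneg⟩ := hRS
  obtain ⟨Ψ, ⟨hΨne, hΨsub, hΨcap⟩, hirr, hrk, hβΨ⟩ := hreg β hβ
  have hβ0 : β ≠ 0 := fun h => h0 (h ▸ hβ)
  have hΨneg : ∀ x ∈ Ψ, -x ∈ Ψ := by
    intro x hx
    rw [← hΨcap]
    exact ⟨hneg x (hΨsub hx), Submodule.neg_mem _ (Submodule.subset_span hx)⟩
  have hΨ0 : ∀ x ∈ Ψ, x ≠ (0:E') := fun x hx h => h0 (h ▸ hΨsub hx)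
  have hexγ : ∃ γ ∈ Ψ, γ ∉ (Submodule.span ℝ {β} : Set E') := by
    by_contra hcon
    push_neg at hcon
    have hle : Submodule.span ℝ Ψ ≤ Submodule.span ℝ {β} := Submodule.span_le.mpr hcon
    have hmono : Module.finrank ℝ (Submodule.span ℝ Ψ) ≤
        Module.finrank ℝ (Submodule.span ℝ ({β} : Set E')) := Submodule.finrank_mono hle
    rw [hrk, finrank_span_singleton hβ0] at hmono
    omega
  obtain ⟨γ, hγΨ, hγβ⟩ := hexγ
  have hγ0 : γ ≠ 0 := hΨ0 γ hγΨ
  have hexδ : ∃ δ ∈ Ψ, δ ∉ (Submodule.span ℝ {β} : Set E') ∧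
      δ ∉ (Submodule.span ℝ {γ} : Set E') := by
    by_contra hcon
    push_neg at hcon
    apply hirr
    refine ⟨Ψ ∩ (Submodule.span ℝ {β} : Set E'), Ψ \ (Submodule.span ℝ {β} : Set E'),
      ⟨β, hβΨ, Submodule.mem_span_singleton_self β⟩, ⟨γ, hγΨ, hγβ⟩,
      Set.disjoint_left.mpr (fun x hx hx' => hx'.2 hx.2), Set.inter_union_diff _ _, ?_⟩
    have hA : Submodule.span ℝ (Ψ ∩ (Submodule.span ℝ {β} : Set E')) ≤
        Submodule.span ℝ ({β} : Set E') := Submodule.span_le.mpr (fun x hx => hx.2)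
    have hB : Submodule.span ℝ (Ψ \ (Submodule.span ℝ {β} : Set E')) ≤
        Submodule.span ℝ ({γ} : Set E') :=
      Submodule.span_le.mpr (fun x hx => hcon x hx.1 hx.2)
    rw [eq_bot_iff]
    intro x hx
    have hxβ := hA hx.1
    have hxγ := hB hx.2
    rw [Submodule.mem_span_singleton] at hxβ hxγ
    obtain ⟨a, rfl⟩ := hxβ
    obtain ⟨b, hb⟩ := hxγ
    simp only [Submodule.mem_bot]
    by_contra hx0
    have hb0 : b ≠ 0 := by
      rintro rfl
      rw [zero_smul] at hb
      exact hx0 hb.symm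
    apply hγβ
    rw [SetLike.mem_coe, Submodule.mem_span_singleton]
    exact ⟨b⁻¹ * a, by rw [mul_smul, ← hb, smul_smul, inv_mul_cancel₀ hb0, one_smul]⟩
  obtain ⟨δ, hδΨ, hδβ, hδγ⟩ := hexδ
  have hδ0 : δ ≠ 0 := hΨ0 δ hδΨ
  have hind : LinearIndependent ℝ ![γ, δ] := aux_pair_indep hγ0 hδ0 hδγ
  have hspan2 : Submodule.span ℝ ({γ, δ} : Set E') = Submodule.span ℝ Ψ := by
    apply Submodule.eq_of_le_of_finrank_le
    · apply Submodule.span_le.mpr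
      rintro x (rfl | rfl)
      · exact Submodule.subset_span hγΨ
      · exact Submodule.subset_span hδΨ
    · rw [hrk, ← aux_range_pair γ δ, finrank_span_eq_card hind]
      simp
  have hβmem : β ∈ Submodule.span ℝ ({γ, δ} : Set E') := by
    rw [hspan2]; exact Submodule.subset_span hβΨ
  obtain ⟨a, b, hab⟩ := Submodule.mem_span_pair.mp hβmem
  have ha0 : a ≠ 0 := by
    rintro rfl
    rw [zero_smul, zero_add] at hab
    have hb0 : b ≠ 0 := by rintro rfl; rw [zero_smul] at hab; exact hβ0 hab.symm
    apply hδβ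
    rw [SetLike.mem_coe, Submodule.mem_span_singleton]
    exact ⟨b⁻¹, by rw [← hab, smul_smul, inv_mul_cancel₀ hb0, one_smul]⟩
  have hb0 : b ≠ 0 := by
    rintro rfl
    rw [zero_smul, add_zero] at hab
    apply hγβ
    rw [SetLike.mem_coe, Submodule.mem_span_singleton]
    exact ⟨a⁻¹, by rw [← hab, smul_smul, inv_mul_cancel₀ ha0, one_smul]⟩
  -- sign normalization
  set γ₁ : E' := if 0 < a then γ else -γ with hγ₁def
  set δ₁ : E' := if 0 < b then δ else -δ with hδ₁def
  have hsγ : |a| • γ₁ = a • γ := by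
    rw [hγ₁def]; split_ifs with h
    · rw [abs_of_pos h]
    · rw [abs_of_nonpos (le_of_not_gt h), smul_neg, neg_smul, neg_neg]
  have hsδ : |b| • δ₁ = b • δ := by
    rw [hδ₁def]; split_ifs with h
    · rw [abs_of_pos h]
    · rw [abs_of_nonpos (le_of_not_gt h), smul_neg, neg_smul, neg_neg]
  have ha₁ : (0:ℝ) < |a| := abs_pos.mpr ha0
  have hb₁ : (0:ℝ) < |b| := abs_pos.mpr hb0
  have hab₁ : |a| • γ₁ + |b| • δ₁ = β := by rw [hsγ, hsδ]; exact hab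
  have hγ₁Ψ : γ₁ ∈ Ψ := by rw [hγ₁def]; split_ifs; exacts [hγΨ, hΨneg γ hγΨ]
  have hδ₁Ψ : δ₁ ∈ Ψ := by rw [hδ₁def]; split_ifs; exacts [hδΨ, hΨneg δ hδΨ]
  have hγ₁Φ : γ₁ ∈ Φ := hΨsub hγ₁Ψ
  have hδ₁Φ : δ₁ ∈ Φ := hΨsub hδ₁Ψ
  have hγ₁0 : γ₁ ≠ 0 := hΨ0 γ₁ hγ₁Ψ
  have hδ₁0 : δ₁ ≠ 0 := hΨ0 δ₁ hδ₁Ψ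
  have hsingβ : ∀ x : E', x ∉ (Submodule.span ℝ {β} : Set E') →
      -x ∉ (Submodule.span ℝ {β} : Set E') := by
    intro x hx hmem
    apply hx
    rw [SetLike.mem_coe] at hmem ⊢
    simpa using Submodule.neg_mem _ hmem
  have hγ₁β : γ₁ ∉ (Submodule.span ℝ {β} : Set E') := by
    rw [hγ₁def]; split_ifs
    · exact hγβ
    · exact hsingβ γ hγβ
  have hδ₁β : δ₁ ∉ (Submodule.span ℝ {β} : Set E') := by
    rw [hδ₁def]; split_ifs
    · exact hδβ
    · exact hsingβ δ hδβ
  have hδ₁γ₁ : δ₁ ∉ (Submodule.span ℝ {γ₁} : Set E') := by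
    intro hmem
    apply hδγ
    rw [SetLike.mem_coe, Submodule.mem_span_singleton] at hmem ⊢
    obtain ⟨c, hc⟩ := hmem
    rw [hγ₁def] at hc
    rw [hδ₁def] at hc
    split_ifs at hc
    · exact ⟨c, hc⟩
    · exact ⟨-c, by rw [neg_smul, hc, neg_neg]⟩
    · refine ⟨-c, ?_⟩
      rw [neg_smul, ← smul_neg]
      exact hc
    · refine ⟨c, ?_⟩
      rw [smul_neg] at hc
      exact neg_inj.mp hc
  have hind₁ : LinearIndependent ℝ ![γ₁, δ₁] := aux_pair_indep hγ₁0 hδ₁0 hδ₁γ₁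
  obtain ⟨f, hgp, hfγ₁, hfδ₁⟩ := aux_exists_gp Φ hfin h0 hind₁
  have hfβ : 0 < f β := by
    rw [← hab₁]
    simp only [map_add, map_smul, smul_eq_mul]
    nlinarith
  refine ⟨f, hgp, hfβ, ⟨⟨hβ, hfβ⟩, ?_⟩⟩
  rintro ⟨-, Φ₂', hB₂, hcm', hβmem'⟩
  obtain ⟨g, hggp, rfl⟩ := hB₂
  -- the span of the intersection is span {β}
  have hβint : β ∈ ({α ∈ Φ | 0 < f α} ∩ {α ∈ Φ | 0 < g α}) := hβmem'
  have hle : Submodule.span ℝ {β} ≤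
      Submodule.span ℝ ({α ∈ Φ | 0 < f α} ∩ {α ∈ Φ | 0 < g α}) := by
    rw [Submodule.span_singleton_le_iff_mem]
    exact Submodule.subset_span hβint
  have heq : Submodule.span ℝ ({β} : Set E') =
      Submodule.span ℝ ({α ∈ Φ | 0 < f α} ∩ {α ∈ Φ | 0 < g α}) := by
    apply Submodule.eq_of_le_of_finrank_le hle
    rw [finrank_span_singleton hβ0]
    exact le_of_eq hcm'
  have hsub : ({α ∈ Φ | 0 < f α} ∩ {α ∈ Φ | 0 < g α}) ⊆
      (Submodule.span ℝ ({β} : Set E') : Set E') := by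
    rw [heq]; exact Submodule.subset_span
  have hgγ₁ : g γ₁ < 0 := by
    have hnot : γ₁ ∉ ({α ∈ Φ | 0 < f α} ∩ {α ∈ Φ | 0 < g α}) :=
      fun h => hγ₁β (hsub h)
    have : ¬ 0 < g γ₁ := fun h => hnot ⟨⟨hγ₁Φ, hfγ₁⟩, ⟨hγ₁Φ, h⟩⟩
    rcases lt_or_gt_of_ne (hggp.1 γ₁ hγ₁Φ) with h | h
    · exact h
    · exact absurd h this
  have hgδ₁ : g δ₁ < 0 := by
    have hnot : δ₁ ∉ ({α ∈ Φ | 0 < f α} ∩ {α ∈ Φ | 0 < g α}) :=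
      fun h => hδ₁β (hsub h)
    have : ¬ 0 < g δ₁ := fun h => hnot ⟨⟨hδ₁Φ, hfδ₁⟩, ⟨hδ₁Φ, h⟩⟩
    rcases lt_or_gt_of_ne (hggp.1 δ₁ hδ₁Φ) with h | h
    · exact h
    · exact absurd h this
  have hgβ : 0 < g β := hβmem'.2.2
  rw [← hab₁] at hgβ
  simp only [map_add, map_smul, smul_eq_mul] at hgβ
  nlinarith

end AuxCore

/-- Let `Φ` be a regular root system and `Γ` a group strongly graded
by `Φ` with root subgroups `{K_α}`.  If `Φ₁, Φ₂ ∈ Borel(Φ)` are co-maximal, then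
`⟨K_{Φ₁∩Φ₂}, K_{−(Φ₁∩Φ₂)}⟩ = Γ`. -/
theorem comaximal_intersection_generates
    (Φ : Set E) (hΦ : IsRootSystem Φ) (hreg : IsRegularRootSystem Φ)
    (K : E → Subgroup Γ) (hgr : IsStronglyGraded Φ K)
    (Φ₁ Φ₂ : Set E) (h₁ : IsBorelSet Φ Φ₁) (h₂ : IsBorelSet Φ Φ₂)
    (hcm : CoMaximal Φ₁ Φ₂) :
    KA K (Φ₁ ∩ Φ₂) ⊔ KA K (-(Φ₁ ∩ Φ₂)) = ⊤ := by
  classical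
  obtain ⟨hfin, hspan, h0, hneg⟩ := hΦ
  obtain ⟨f₁, hf₁, hB₁⟩ := h₁
  obtain ⟨f₂, hf₂, hB₂⟩ := h₂
  set L : Submodule ℝ E := Submodule.span ℝ (Φ₁ ∩ -Φ₂) with hLdef
  have hrkL : Module.finrank ℝ L = 1 := hcm
  have hoff : ∀ x ∈ Φ, x ∉ L → x ∈ (Φ₁ ∩ Φ₂) ∪ -(Φ₁ ∩ Φ₂) := by
    intro x hx hxL
    have hfx1 : f₁ x ≠ 0 := hf₁.1 x hx
    have hfx2 : f₂ x ≠ 0 := hf₂.1 x hx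
    have hnx : -x ∈ Φ := hneg x hx
    rcases lt_or_gt_of_ne hfx1 with h1 | h1 <;> rcases lt_or_gt_of_ne hfx2 with h2 | h2
    · right
      rw [Set.mem_neg]
      constructor
      · rw [hB₁]; exact ⟨hnx, by rw [map_neg]; linarith⟩
      · rw [hB₂]; exact ⟨hnx, by rw [map_neg]; linarith⟩
    · exfalso
      apply hxL
      have hmem : -x ∈ Φ₁ ∩ -Φ₂ := by
        constructor
        · rw [hB₁]; exact ⟨hnx, by rw [map_neg]; linarith⟩
        · rw [Set.mem_neg, neg_neg, hB₂]; exact ⟨hx, h2⟩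
      have hmem' : -x ∈ L := Submodule.subset_span hmem
      simpa using Submodule.neg_mem L hmem'
    · exfalso
      apply hxL
      apply Submodule.subset_span
      constructor
      · rw [hB₁]; exact ⟨hx, h1⟩
      · rw [Set.mem_neg, hB₂]; exact ⟨hnx, by rw [map_neg]; linarith⟩
    · left
      exact ⟨by rw [hB₁]; exact ⟨hx, h1⟩, by rw [hB₂]; exact ⟨hx, h2⟩⟩
  have hKA : ∀ α ∈ Φ, K α ≤ KA K (Φ₁ ∩ Φ₂) ⊔ KA K (-(Φ₁ ∩ Φ₂)) := by
    intro α hα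
    by_cases hαL : α ∈ L
    · have hα0 : α ≠ 0 := fun h => h0 (h ▸ hα)
      have hLspan : Submodule.span ℝ ({α} : Set E) = L := by
        apply Submodule.eq_of_le_of_finrank_le
        · rw [Submodule.span_singleton_le_iff_mem]; exact hαL
        · rw [hrkL, finrank_span_singleton hα0]
      obtain ⟨f, hgp, hfα, hcore⟩ := aux_mem_core Φ ⟨hfin, hspan, h0, hneg⟩ hreg hα
      have hstr := hgr.2 {a ∈ Φ | 0 < f a} ⟨f, hgp, rfl⟩ α hcore
      refine le_trans hstr ?_
      apply iSup₂_le
      intro x hx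
      obtain ⟨⟨hxΦ, hfx⟩, hxray⟩ := hx
      have hx' : x ∈ (Φ₁ ∩ Φ₂) ∪ -(Φ₁ ∩ Φ₂) := by
        apply hoff x hxΦ
        intro hxL2
        apply hxray
        rw [← hLspan] at hxL2
        rw [Submodule.mem_span_singleton] at hxL2
        obtain ⟨c, hc⟩ := hxL2
        have hc0 : 0 < c := by
          by_contra hcneg
          push_neg at hcneg
          have : f x = c * f α := by rw [← hc, map_smul, smul_eq_mul]
          nlinarith
        exact ⟨c, hc0, hc.symm⟩
      rcases hx' with hx' | hx'
      · exact le_sup_of_le_left (le_biSup K hx')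
      · exact le_sup_of_le_right (le_biSup K hx')
    · rcases hoff α hα hαL with h | h
      · exact le_sup_of_le_left (le_biSup K h)
      · exact le_sup_of_le_right (le_biSup K h)
  rw [eq_top_iff, ← hgr.1.1]
  exact iSup₂_le fun α hα => hKA α hα
end

section
/- Let Φ be a root system in a finite-dimensional real vector space and let Γ be a group graded by Φ with root subgroups {K_α}_{α∈Φ}. For every Borel set Φ₁ ∈ Borel(Φ), the subgroup K_{Φ₁} is boundedly generated by the subgroups K_α, α ∈ Φ₁: there is an ordering α₁, ..., α_n of the elements of Φ₁ such that K_{Φ₁} ⊆ K_{α₁}·K_{α₂}·…·K_{α_n}; in particular every element of K_{Φ₁} is a product of at most |Φ₁| elements of ⋃_{α∈Φ₁} K_α. -/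
universe u v

variable {E : Type u} [AddCommGroup E] [Module ℝ E] [FiniteDimensional ℝ E]
variable {Γ : Type v} [Group Γ]

theorem KA_eq_closure (K : E → Subgroup Γ) (A : Set E) :
    KA K A = Subgroup.closure (⋃ α ∈ A, (K α : Set Γ)) := by
  simp [KA, Subgroup.closure_iUnion, Subgroup.closure_eq]

theorem KA_le_KA (K : E → Subgroup Γ) {A B : Set E} (h : A ⊆ B) : KA K A ≤ KA K B := by
  apply iSup₂_le
  intro α hα
  exact le_iSup₂ (f := fun α (_ : α ∈ B) => K α) α (h hα)

theorem le_KA (K : E → Subgroup Γ) {A : Set E} {α : E} (h : α ∈ A) : K α ≤ KA K A :=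
  le_iSup₂ (f := fun α (_ : α ∈ A) => K α) α h

open scoped commutatorElement in
theorem borel_aux (Φ : Set E) (f : E →ₗ[ℝ] ℝ)
    (hgp : IsGeneralPosition Φ f) (K : E → Subgroup Γ) (hgr : IsGraded Φ K)
    (S : Finset E) (hsub : (↑S : Set E) ⊆ {α ∈ Φ | 0 < f α})
    (hup : ∀ γ ∈ Φ, 0 < f γ → ∀ β ∈ S, f β ≤ f γ → γ ∈ S) :
    ∃ (n : ℕ) (α : Fin n → E), Function.Injective α ∧ (∀ i, α i ∈ S) ∧
      (∀ β ∈ S, ∃ i, α i = β) ∧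
      ∀ g ∈ KA K ↑S, ∃ k : Fin n → Γ, (∀ i, k i ∈ K (α i)) ∧ g = (List.ofFn k).prod := by
  classical
  induction S using Finset.strongInduction with
  | _ S ih =>
  rcases S.eq_empty_or_nonempty with rfl | hne
  · refine ⟨0, Fin.elim0, fun i => i.elim0, fun i => i.elim0, fun β hβ => absurd hβ (by simp),
      fun g hg => ⟨Fin.elim0, fun i => i.elim0, ?_⟩⟩
    have : KA K (↑(∅ : Finset E) : Set E) = ⊥ := by simp [KA]
    rw [this] at hg
    simpa using hg
  · obtain ⟨β, hβS, hβmin⟩ := S.exists_min_image f hne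
    have hβΦ : β ∈ Φ := (hsub hβS).1
    have hβpos : 0 < f β := (hsub hβS).2
    set S' : Finset E := S.erase β with hS'
    have hS'sub : (↑S' : Set E) ⊆ {α ∈ Φ | 0 < f α} :=
      Set.Subset.trans (by exact_mod_cast Finset.erase_subset β S) hsub
    have hup' : ∀ γ ∈ Φ, 0 < f γ → ∀ β' ∈ S', f β' ≤ f γ → γ ∈ S' := by
      intro γ hγΦ hγpos β' hβ'S' hle
      have hβ'S : β' ∈ S := Finset.mem_of_mem_erase hβ'S'
      have hγS : γ ∈ S := hup γ hγΦ hγpos β' hβ'S hle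
      have hβ'ne : β' ≠ β := Finset.ne_of_mem_erase hβ'S'
      have hβ'Φ : β' ∈ Φ := (hsub hβ'S).1
      have hlt : f β < f β' :=
        lt_of_le_of_ne (hβmin β' hβ'S) (fun h => hgp.2 β hβΦ β' hβ'Φ (fun e => hβ'ne e.symm) h)
      refine Finset.mem_erase.mpr ⟨?_, hγS⟩
      intro hγβ
      rw [hγβ] at hle
      linarith
    obtain ⟨n', α', hinj, hmem, hsurj, hdec⟩ := ih S' (Finset.erase_ssubset hβS) hS'sub hup'
    -- conjugation by elements of K β normalizes KA K S'
    have hconj : ∀ x ∈ K β, ∀ h ∈ KA K (↑S' : Set E), x * h * x⁻¹ ∈ KA K (↑S' : Set E) := by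
      intro x hx h hh
      rw [KA_eq_closure] at hh
      induction hh using Subgroup.closure_induction with
      | mem y hy =>
        simp only [Set.mem_iUnion] at hy
        obtain ⟨γ, hγS', hyK⟩ := hy
        have hγS : γ ∈ S := Finset.mem_of_mem_erase hγS'
        have hγΦ : γ ∈ Φ := (hsub hγS).1
        have hγpos : 0 < f γ := (hsub hγS).2
        have hcond : ¬ ∃ c : ℝ, c < 0 ∧ γ = c • β := by
          rintro ⟨c, hc, rfl⟩
          simp only [map_smul, smul_eq_mul] at hγpos
          nlinarith
        have hcomm := hgr.2 β hβΦ γ hγΦ hcond x hx y hyK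
        have hTle : KA K {γ' ∈ Φ | ∃ a b : ℝ, 1 ≤ a ∧ 1 ≤ b ∧ γ' = a • β + b • γ} ≤
            KA K (↑S' : Set E) := by
          apply KA_le_KA
          rintro γ' ⟨hγ'Φ, a, b, ha, hb, rfl⟩
          have hval : f (a • β + b • γ) = a * f β + b * f γ := by
            simp [map_add, map_smul, smul_eq_mul]
          have hpos : 0 < f (a • β + b • γ) := by rw [hval]; nlinarith
          have hge : f γ ≤ f (a • β + b • γ) := by rw [hval]; nlinarith
          have hmemS : a • β + b • γ ∈ S := hup _ hγ'Φ hpos γ hγS hge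
          refine Finset.mem_coe.mpr (Finset.mem_erase.mpr ⟨?_, hmemS⟩)
          intro heq
          have : f (a • β + b • γ) = f β := by rw [heq]
          rw [hval] at this
          have hγβlt : f β < f γ := by
            refine lt_of_le_of_ne (hβmin γ hγS) ?_
            intro h
            exact hgp.2 β hβΦ γ hγΦ (fun e => (Finset.ne_of_mem_erase hγS') e.symm) h
          nlinarith
        have h1 : ⁅x, y⁆ ∈ KA K (↑S' : Set E) := hTle hcomm
        have h2 : y ∈ KA K (↑S' : Set E) := le_KA K (Finset.mem_coe.mpr hγS') hyK
        have : x * y * x⁻¹ = ⁅x, y⁆ * y := by group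
        rw [this]
        exact mul_mem h1 h2
      | one => simpa using one_mem (KA K (↑S' : Set E))
      | mul a b ha hb iha ihb =>
        have : x * (a * b) * x⁻¹ = (x * a * x⁻¹) * (x * b * x⁻¹) := by group
        rw [this]
        exact mul_mem iha ihb
      | inv a ha iha =>
        have : x * a⁻¹ * x⁻¹ = (x * a * x⁻¹)⁻¹ := by group
        rw [this]
        exact inv_mem iha
    -- decomposition of KA K S
    have hdecomp : ∀ g ∈ KA K (↑S : Set E),
        ∃ h ∈ KA K (↑S' : Set E), ∃ x ∈ K β, g = h * x := by
      intro g hg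
      rw [KA_eq_closure] at hg
      induction hg using Subgroup.closure_induction with
      | mem y hy =>
        simp only [Set.mem_iUnion] at hy
        obtain ⟨γ, hγS, hyK⟩ := hy
        by_cases hγβ : γ = β
        · exact ⟨1, one_mem _, y, by rw [← hγβ]; exact hyK, (one_mul y).symm⟩
        · have hγS' : γ ∈ S' := Finset.mem_erase.mpr ⟨hγβ, hγS⟩
          exact ⟨y, le_KA K (Finset.mem_coe.mpr hγS') hyK, 1, one_mem _, (mul_one y).symm⟩
      | one => exact ⟨1, one_mem _, 1, one_mem _, (one_mul 1).symm⟩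
      | mul a b ha hb iha ihb =>
        obtain ⟨h, hh, x, hx, rfl⟩ := iha
        obtain ⟨h', hh', x', hx', rfl⟩ := ihb
        refine ⟨h * (x * h' * x⁻¹), mul_mem hh (hconj x hx h' hh'), x * x',
          mul_mem hx hx', by group⟩
      | inv a ha iha =>
        obtain ⟨h, hh, x, hx, rfl⟩ := iha
        refine ⟨x⁻¹ * h⁻¹ * x, ?_, x⁻¹, inv_mem hx, by group⟩
        have := hconj x⁻¹ (inv_mem hx) h⁻¹ (inv_mem hh)
        simpa using this
    -- assemble
    refine ⟨n' + 1, Fin.snoc α' β, ?_, ?_, ?_, ?_⟩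
    · have hne : ∀ i, α' i ≠ β := fun i h => Finset.ne_of_mem_erase (hmem i) h
      intro i j hij
      rcases Fin.eq_castSucc_or_eq_last i with ⟨i', rfl⟩ | rfl <;>
        rcases Fin.eq_castSucc_or_eq_last j with ⟨j', rfl⟩ | rfl
      · simp only [Fin.snoc_castSucc] at hij
        exact congrArg Fin.castSucc (hinj hij)
      · simp only [Fin.snoc_castSucc, Fin.snoc_last] at hij
        exact absurd hij (hne i')
      · simp only [Fin.snoc_castSucc, Fin.snoc_last] at hij
        exact absurd hij.symm (hne j')
      · rfl
    · intro i
      refine Fin.lastCases ?_ ?_ i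
      · simpa [Fin.snoc_last] using hβS
      · intro i'
        simpa [Fin.snoc_castSucc] using Finset.mem_of_mem_erase (hmem i')
    · intro β' hβ'S
      by_cases hβ'β : β' = β
      · exact ⟨Fin.last n', by simp [Fin.snoc_last, hβ'β]⟩
      · obtain ⟨i, hi⟩ := hsurj β' (Finset.mem_erase.mpr ⟨hβ'β, hβ'S⟩)
        exact ⟨Fin.castSucc i, by simp [Fin.snoc_castSucc, hi]⟩
    · intro g hg
      obtain ⟨h, hh, x, hx, rfl⟩ := hdecomp g hg
      obtain ⟨k', hk', hprod⟩ := hdec h hh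
      refine ⟨Fin.snoc k' x, ?_, ?_⟩
      · intro i
        refine Fin.lastCases ?_ ?_ i
        · simpa [Fin.snoc_last] using hx
        · intro i'
          simpa [Fin.snoc_castSucc] using hk' i'
      · rw [List.ofFn_succ']
        simp only [Fin.snoc_castSucc, Fin.snoc_last, List.concat_eq_append, List.prod_append,
          List.prod_cons, List.prod_nil, mul_one]
        rw [← hprod]

/-- Let `Φ` be a root system and `Γ` a group graded by `Φ` with root
subgroups `{K_α}`.  For every Borel set `Φ₁` of `Φ`, the subgroup `K_{Φ₁}` is boundedly
generated by the `K_α`, `α ∈ Φ₁`: there is an enumeration `α₁, …, α_n` of the elements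
of `Φ₁` such that `K_{Φ₁} ⊆ K_{α₁}·K_{α₂}·…·K_{α_n}`; in particular every element of
`K_{Φ₁}` is a product of at most `|Φ₁|` elements of `⋃_{α ∈ Φ₁} K_α`. -/
theorem borel_subgroup_boundedly_generated
    (Φ : Set E) (hΦ : IsRootSystem Φ) (K : E → Subgroup Γ) (hgr : IsGraded Φ K)
    (Φ₁ : Set E) (h₁ : IsBorelSet Φ Φ₁) :
    ∃ (n : ℕ) (α : Fin n → E), Function.Injective α ∧ (∀ i, α i ∈ Φ₁) ∧
      (∀ β ∈ Φ₁, ∃ i, α i = β) ∧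
      ∀ g ∈ KA K Φ₁, ∃ k : Fin n → Γ, (∀ i, k i ∈ K (α i)) ∧ g = (List.ofFn k).prod := by
  obtain ⟨f, hgp, hΦ₁⟩ := h₁
  have hfin : Φ₁.Finite := hΦ.1.subset (by rw [hΦ₁]; exact fun x hx => hx.1)
  have hcoe : (↑hfin.toFinset : Set E) = Φ₁ := hfin.coe_toFinset
  obtain ⟨n, α, hinj, hmem, hsurj, hdec⟩ := borel_aux Φ f hgp K hgr hfin.toFinset
    (by rw [hcoe, hΦ₁]) (by
      intro γ hγΦ hγpos β hβ hle
      rw [Set.Finite.mem_toFinset, hΦ₁]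
      exact ⟨hγΦ, hγpos⟩)
  refine ⟨n, α, hinj, ?_, ?_, ?_⟩
  · intro i
    have := hmem i
    rwa [Set.Finite.mem_toFinset] at this
  · intro β hβ
    exact hsurj β (by rwa [Set.Finite.mem_toFinset])
  · intro g hg
    exact hdec g (by rwa [hcoe])
end
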